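/- Let X ⊆ ℝⁿ be convex and closed, H : ℝⁿ × ℝⁿ → ℝ, and for each x ∈ X let A(x) be a finite nonempty index set and M_a(·; x) : ℝⁿ → ℝ convex functions with M(y; x) = min_{a ∈ A(x)} M_a(y; x). Assume: (a) M(x; x) = H(x; x) for all x ∈ X; (b) there exists μ̄ ≥ 0 with H(y; x) ≤ M(y; x) + (μ̄/2)‖y − x‖² for all x, y ∈ X. If x̄ ∈ X is a local minimizer of H(·; x̄) over X, then for every a ∈ A(x̄) with M_a(x̄; x̄) = H(x̄; x̄) one has x̄ ∈ argmin_{x ∈ X} M_a(x; x̄). -/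
import Mathlib


/-- Theorem on model criticality: if `x̄` is a local minimizer over `X` of the improvement
function `H(·; x̄)` and the model `M(·;x) = min_{a ∈ A x} M_a(·;x)` satisfies the model
assumptions, then `x̄` globally minimizes over `X` every convex piece `M_a(·; x̄)` that is
active, i.e. with `M_a(x̄;x̄) = H(x̄;x̄)`. Here `M a x y` denotes `M_a(y; x)` and
`H x y` denotes `H(y; x)`. -/
theorem stmt_6 {n : ℕ} {ι : Type*} (X : Set (EuclideanSpace ℝ (Fin n)))
    (hXne : X.Nonempty) (hXclosed : IsClosed X) (hXconv : Convex ℝ X)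
    (H : EuclideanSpace ℝ (Fin n) → EuclideanSpace ℝ (Fin n) → ℝ)
    (A : EuclideanSpace ℝ (Fin n) → Finset ι)
    (hA : ∀ x ∈ X, (A x).Nonempty)
    (M : ι → EuclideanSpace ℝ (Fin n) → EuclideanSpace ℝ (Fin n) → ℝ)
    (hconv : ∀ x ∈ X, ∀ a ∈ A x, ConvexOn ℝ Set.univ (M a x))
    (ha : ∀ x (hx : x ∈ X), (A x).inf' (hA x hx) (fun a => M a x x) = H x x)
    (hb : ∃ μbar : ℝ, 0 ≤ μbar ∧ ∀ x (hx : x ∈ X), ∀ y ∈ X,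
      H x y ≤ (A x).inf' (hA x hx) (fun a => M a x y) + μbar / 2 * ‖y - x‖ ^ 2)
    (xbar : EuclideanSpace ℝ (Fin n)) (hxbar : xbar ∈ X)
    (hlocal : ∃ U ∈ nhds xbar, ∀ y ∈ X ∩ U, H xbar xbar ≤ H xbar y) :
    ∀ a ∈ A xbar, M a xbar xbar = H xbar xbar →
      ∀ x ∈ X, M a xbar xbar ≤ M a xbar x := by
  obtain ⟨μ, hμ0, hμ⟩ := hb
  obtain ⟨U, hU, hloc⟩ := hlocal
  obtain ⟨ε, hε, hball⟩ := Metric.mem_nhds_iff.mp hU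
  intro a haA hactive x hx
  -- key local inequality
  have key : ∀ y ∈ X, dist y xbar < ε →
      M a xbar xbar ≤ M a xbar y + μ / 2 * ‖y - xbar‖ ^ 2 := by
    intro y hy hdy
    have h1 : H xbar xbar ≤ H xbar y := hloc y ⟨hy, hball (Metric.mem_ball.mpr hdy)⟩
    have h2 := hμ xbar hxbar y hy
    have h3 : (A xbar).inf' (hA xbar hxbar) (fun b => M b xbar y) ≤ M a xbar y :=
      Finset.inf'_le _ haA
    linarith [hactive]
  by_cases hxx : x = xbar
  · simp [hxx]
  have hnorm : (0:ℝ) < ‖x - xbar‖ := by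
    simpa [sub_eq_zero] using norm_pos_iff.mpr (sub_ne_zero.mpr hxx)
  set C : ℝ := μ / 2 * ‖x - xbar‖ ^ 2 with hC
  have hC0 : 0 ≤ C := by positivity
  set δ : ℝ := min 1 (ε / ‖x - xbar‖) with hδ
  have hδ0 : 0 < δ := lt_min one_pos (div_pos hε hnorm)
  -- for all t ∈ (0, δ), M(xbar) ≤ M(x) + C t
  have main : ∀ t : ℝ, 0 < t → t < δ → M a xbar xbar ≤ M a xbar x + C * t := by
    intro t ht htδ
    have ht1 : t ≤ 1 := le_of_lt (lt_of_lt_of_le htδ (min_le_left _ _))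
    set y := (1 - t) • xbar + t • x with hy
    have hyX : y ∈ X := hXconv hxbar hx (by linarith) (le_of_lt ht) (by ring)
    have hysub : y - xbar = t • (x - xbar) := by
      simp only [hy]; module
    have hynorm : ‖y - xbar‖ = t * ‖x - xbar‖ := by
      rw [hysub, norm_smul, Real.norm_eq_abs, abs_of_pos ht]
    have hdy : dist y xbar < ε := by
      rw [dist_eq_norm, hynorm]
      have : t < ε / ‖x - xbar‖ := lt_of_lt_of_le htδ (min_le_right _ _)
      calc t * ‖x - xbar‖ < (ε / ‖x - xbar‖) * ‖x - xbar‖ := by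
            exact mul_lt_mul_of_pos_right this hnorm
        _ = ε := by field_simp
    have hconvy : M a xbar y ≤ (1 - t) * M a xbar xbar + t * M a xbar x :=
      (hconv xbar hxbar a haA).2 (Set.mem_univ _) (Set.mem_univ _)
        (by linarith) (le_of_lt ht) (by ring)
    have hk := key y hyX hdy
    rw [hynorm] at hk
    have hexp : μ / 2 * (t * ‖x - xbar‖) ^ 2 = C * t * t := by
      simp only [hC]; ring
    rw [hexp] at hk
    have := le_trans hk (by linarith : M a xbar y + C * t * t ≤
      (1 - t) * M a xbar xbar + t * M a xbar x + C * t * t)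
    -- M(xbar) ≤ (1-t) M(xbar) + t M(x) + C t², divide by t
    nlinarith [this, ht, mul_pos ht ht]
  by_contra hcon
  push_neg at hcon
  set d : ℝ := M a xbar xbar - M a xbar x with hd
  have hd0 : 0 < d := by simp only [hd]; linarith
  set t : ℝ := min (δ / 2) (d / (C + 1)) with htdef
  have ht0 : 0 < t := lt_min (by linarith) (div_pos hd0 (by linarith))
  have htδ : t < δ := lt_of_le_of_lt (min_le_left _ _) (by linarith)
  have h := main t ht0 htδ
  have htd : t ≤ d / (C + 1) := min_le_right _ _
  have : C * t ≤ C * (d / (C + 1)) := mul_le_mul_of_nonneg_left htd hC0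
  have hlt : C * (d / (C + 1)) < d := by
    rw [mul_div_assoc']
    rw [div_lt_iff₀ (by linarith : (0:ℝ) < C + 1)]
    nlinarith
  linarith
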